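/- arXiv:2506.17650 — 3 statements merged into one kernel-verified Lean document; each statement's English description precedes it below -/
import Mathlib

section
/- For the Pock–Chambolle diagonal preconditioners with parameter β ∈ [0, 2], namely τ_j = 1/∑_{i=1}^m |A_{ij}|^{2-β} and σ_i = 1/∑_{j=1}^n |A_{ij}|^{β}, the scaled matrix satisfies ‖Σ^{1/2} A T^{1/2}‖₂ ≤ 1, where T = Diag(τ) and Σ = Diag(σ). -/
open Matrix

/-- The spectral norm of a matrix: the operator norm of the induced linear map
between Euclidean spaces. -/
noncomputable def specNorm {m n : ℕ} (B : Matrix (Fin m) (Fin n) ℝ) : ℝ :=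
  ‖LinearMap.toContinuousLinearMap (Matrix.toEuclideanLin B)‖

/-- for the Pock–Chambolle diagonal preconditioners with parameter
`β ∈ [0,2]`, the rescaled matrix satisfies `‖Σ^{1/2} A T^{1/2}‖₂ ≤ 1`. -/
theorem pock_chambolle_specNorm_le_one {m n : ℕ}
    (A : Matrix (Fin m) (Fin n) ℝ) (β : ℝ) (hβ0 : 0 ≤ β) (hβ2 : β ≤ 2)
    (hrow : ∀ i, ∃ j, A i j ≠ 0) (hcol : ∀ j, ∃ i, A i j ≠ 0)
    (τ : Fin n → ℝ) (σ : Fin m → ℝ)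
    (hτ : ∀ j, τ j = (∑ i, |A i j| ^ (2 - β))⁻¹)
    (hσ : ∀ i, σ i = (∑ j, |A i j| ^ β)⁻¹) :
    specNorm (Matrix.diagonal (fun i => Real.sqrt (σ i)) * A *
      Matrix.diagonal (fun j => Real.sqrt (τ j))) ≤ 1 := by
  classical
  have hτpos : ∀ j, (0:ℝ) < ∑ i, |A i j| ^ (2 - β) := by
    intro j
    obtain ⟨i, hi⟩ := hcol j
    exact Finset.sum_pos' (fun i _ => Real.rpow_nonneg (abs_nonneg _) _)
      ⟨i, Finset.mem_univ i, Real.rpow_pos_of_pos (abs_pos.mpr hi) _⟩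
  have hσpos : ∀ i, (0:ℝ) < ∑ j, |A i j| ^ β := by
    intro i
    obtain ⟨j, hj⟩ := hrow i
    exact Finset.sum_pos' (fun j _ => Real.rpow_nonneg (abs_nonneg _) _)
      ⟨j, Finset.mem_univ j, Real.rpow_pos_of_pos (abs_pos.mpr hj) _⟩
  have hτ0 : ∀ j, 0 ≤ τ j := fun j => by rw [hτ]; exact inv_nonneg.mpr (hτpos j).le
  have hσ0 : ∀ i, 0 ≤ σ i := fun i => by rw [hσ]; exact inv_nonneg.mpr (hσpos i).le
  -- main inequality
  have key : ∀ x : Fin n → ℝ,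
      ∑ i, (∑ j, (Real.sqrt (σ i) * A i j * Real.sqrt (τ j)) * x j) ^ 2 ≤ ∑ j, x j ^ 2 := by
    intro x
    have CS : ∀ i, (∑ j, (Real.sqrt (σ i) * A i j * Real.sqrt (τ j)) * x j) ^ 2 ≤
        σ i * ((∑ j, |A i j| ^ β) * ∑ j, |A i j| ^ (2 - β) * (τ j * x j ^ 2)) := by
      intro i
      set f : Fin n → ℝ := fun j => |A i j| ^ (β / 2) with hf
      set g : Fin n → ℝ := fun j => if A i j = 0 then 0 else
        (A i j / |A i j|) * (|A i j| ^ ((2 - β) / 2) * (Real.sqrt (τ j) * x j)) with hg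
      have hfg : ∀ j, f j * g j = A i j * (Real.sqrt (τ j) * x j) := by
        intro j
        by_cases h : A i j = 0
        · simp [hf, hg, h]
        · have habs : (0:ℝ) < |A i j| := abs_pos.mpr h
          simp only [hf, hg, if_neg h]
          have hone : |A i j| ^ (β / 2) * |A i j| ^ ((2 - β) / 2) = |A i j| := by
            rw [← Real.rpow_add habs, show β / 2 + (2 - β) / 2 = 1 by ring, Real.rpow_one]
          calc |A i j| ^ (β / 2) *
                (A i j / |A i j| * (|A i j| ^ ((2 - β) / 2) * (Real.sqrt (τ j) * x j)))
              = |A i j| ^ (β / 2) * |A i j| ^ ((2 - β) / 2) * (A i j / |A i j|) *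
                (Real.sqrt (τ j) * x j) := by ring
            _ = |A i j| * (A i j / |A i j|) * (Real.sqrt (τ j) * x j) := by rw [hone]
            _ = A i j * (Real.sqrt (τ j) * x j) := by
                rw [mul_comm (|A i j|) _, div_mul_cancel₀ _ habs.ne']
      have hf2 : ∀ j, f j ^ 2 = |A i j| ^ β := by
        intro j
        rw [hf]
        rw [← Real.rpow_natCast (|A i j| ^ (β / 2)) 2, ← Real.rpow_mul (abs_nonneg _)]
        norm_num
      have hg2 : ∀ j, g j ^ 2 ≤ |A i j| ^ (2 - β) * (τ j * x j ^ 2) := by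
        intro j
        by_cases h : A i j = 0
        · simp only [hg, if_pos h]
          have : (0:ℝ) ≤ |A i j| ^ (2 - β) * (τ j * x j ^ 2) := by
            have := hτ0 j
            positivity
          simpa using this
        · have habs : (0:ℝ) < |A i j| := abs_pos.mpr h
          have h1 : (A i j / |A i j|) ^ 2 = 1 := by
            rw [div_pow, sq_abs, div_self (pow_ne_zero 2 h)]
          have h2 : (|A i j| ^ ((2 - β) / 2)) ^ 2 = |A i j| ^ (2 - β) := by
            rw [← Real.rpow_natCast (|A i j| ^ ((2 - β) / 2)) 2,
              ← Real.rpow_mul (abs_nonneg _)]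
            norm_num
          have h3 : Real.sqrt (τ j) ^ 2 = τ j := Real.sq_sqrt (hτ0 j)
          simp only [hg, if_neg h]
          rw [mul_pow, mul_pow, mul_pow, h1, h2, h3, one_mul]
      have hsum : ∑ j, (Real.sqrt (σ i) * A i j * Real.sqrt (τ j)) * x j =
          Real.sqrt (σ i) * ∑ j, f j * g j := by
        rw [Finset.mul_sum]
        refine Finset.sum_congr rfl fun j _ => ?_
        rw [hfg j]; ring
      rw [hsum, mul_pow, Real.sq_sqrt (hσ0 i)]
      have csq : (∑ j, f j * g j) ^ 2 ≤ (∑ j, f j ^ 2) * ∑ j, g j ^ 2 :=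
        Finset.sum_mul_sq_le_sq_mul_sq Finset.univ f g
      have hle : (∑ j, f j ^ 2) * ∑ j, g j ^ 2 ≤
          (∑ j, |A i j| ^ β) * ∑ j, |A i j| ^ (2 - β) * (τ j * x j ^ 2) := by
        have e1 : ∑ j, f j ^ 2 = ∑ j, |A i j| ^ β :=
          Finset.sum_congr rfl fun j _ => hf2 j
        have e2 : ∑ j, g j ^ 2 ≤ ∑ j, |A i j| ^ (2 - β) * (τ j * x j ^ 2) :=
          Finset.sum_le_sum fun j _ => hg2 j
        rw [e1]
        exact mul_le_mul_of_nonneg_left e2 (Finset.sum_nonneg fun j _ =>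
          Real.rpow_nonneg (abs_nonneg _) _)
        |>.trans_eq rfl
      exact mul_le_mul_of_nonneg_left (csq.trans hle) (hσ0 i)
    calc ∑ i, (∑ j, (Real.sqrt (σ i) * A i j * Real.sqrt (τ j)) * x j) ^ 2
        ≤ ∑ i, σ i * ((∑ j, |A i j| ^ β) * ∑ j, |A i j| ^ (2 - β) * (τ j * x j ^ 2)) :=
          Finset.sum_le_sum fun i _ => CS i
      _ = ∑ i, ∑ j, |A i j| ^ (2 - β) * (τ j * x j ^ 2) := by
          refine Finset.sum_congr rfl fun i _ => ?_
          rw [← mul_assoc, hσ i, inv_mul_cancel₀ (hσpos i).ne', one_mul]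
      _ = ∑ j, (∑ i, |A i j| ^ (2 - β)) * (τ j * x j ^ 2) := by
          rw [Finset.sum_comm]
          exact Finset.sum_congr rfl fun j _ => (Finset.sum_mul _ _ _).symm
      _ = ∑ j, x j ^ 2 := by
          refine Finset.sum_congr rfl fun j _ => ?_
          rw [hτ j, ← mul_assoc, mul_inv_cancel₀ (hτpos j).ne', one_mul]
  -- conclude via operator norm bound
  rw [specNorm]
  refine ContinuousLinearMap.opNorm_le_bound _ zero_le_one fun x => ?_
  rw [one_mul]
  set B := Matrix.diagonal (fun i => Real.sqrt (σ i)) * A *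
    Matrix.diagonal (fun j => Real.sqrt (τ j)) with hB
  have hcomp : ∀ i, (LinearMap.toContinuousLinearMap (Matrix.toEuclideanLin B) x) i =
      ∑ j, (Real.sqrt (σ i) * A i j * Real.sqrt (τ j)) * x j := by
    intro i
    simp only [LinearMap.coe_toContinuousLinearMap', Matrix.toEuclideanLin_apply]
    simp [hB, Matrix.mulVec, dotProduct, Matrix.mul_diagonal, Matrix.diagonal_mul]
  rw [EuclideanSpace.norm_eq, EuclideanSpace.norm_eq]
  apply Real.sqrt_le_sqrt
  calc ∑ i, ‖(LinearMap.toContinuousLinearMap (Matrix.toEuclideanLin B) x) i‖ ^ 2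
      = ∑ i, (∑ j, (Real.sqrt (σ i) * A i j * Real.sqrt (τ j)) * x j) ^ 2 := by
        refine Finset.sum_congr rfl fun i _ => ?_
        rw [hcomp i, Real.norm_eq_abs, sq_abs]
    _ ≤ ∑ j, (x j) ^ 2 := key (fun j => x j)
    _ = ∑ j, ‖x j‖ ^ 2 := by
        refine Finset.sum_congr rfl fun j _ => ?_
        rw [Real.norm_eq_abs, sq_abs]
end

section
/- At any point T = Diag(t) with t ∈ ℝ^n such that every component of x^{k+1/2}(T) = x^k - T g is nonzero (g = c - A^T λ^k), the primal loss ℓ^p_k(T) = L(proj_{ℝ^n_+}(x^k - T g), λ^k) - L(x^k, λ^k) is differentiable in t with partial derivative ∂ℓ^p_k/∂t_j = -g_j² · 𝟙{(x^k - T g)_j ≥ 0}. -/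
open Matrix

/-- Lagrangian `L(x, λ) = cᵀx - λᵀAx + bᵀλ`. -/
noncomputable def Lagr {m n : ℕ} (A : Matrix (Fin m) (Fin n) ℝ) (b : Fin m → ℝ)
    (c : Fin n → ℝ) (x : Fin n → ℝ) (lam : Fin m → ℝ) : ℝ :=
  c ⬝ᵥ x - lam ⬝ᵥ (A.mulVec x) + b ⬝ᵥ lam

/-- Componentwise projection onto the nonnegative orthant. -/
def projPos {n : ℕ} (y : Fin n → ℝ) : Fin n → ℝ := fun j => max (y j) 0

/-- at any `T = Diag(t)` such that every component of
`x - Tg` is nonzero (`g = c - Aᵀλ`), the primal loss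
`ℓᵖ(T) = L(proj(x - Tg), λ) - L(x, λ)` is differentiable in `t` with partial
derivatives `∂ℓᵖ/∂tⱼ = -gⱼ² · 𝟙{(x - Tg)ⱼ ≥ 0}`. -/
theorem primal_loss_partial_derivatives {m n : ℕ}
    (A : Matrix (Fin m) (Fin n) ℝ) (b : Fin m → ℝ) (c : Fin n → ℝ)
    (x : Fin n → ℝ) (lam : Fin m → ℝ)
    (g : Fin n → ℝ) (hg : g = c - Aᵀ.mulVec lam)
    (lp : (Fin n → ℝ) → ℝ)
    (hlp : lp = fun t =>
      Lagr A b c (projPos (x - (Matrix.diagonal t).mulVec g)) lam - Lagr A b c x lam)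
    (t : Fin n → ℝ)
    (hnz : ∀ j, x j - t j * g j ≠ 0) :
    ∃ D : (Fin n → ℝ) →L[ℝ] ℝ, HasFDerivAt lp D t ∧
      ∀ j, D (Pi.single j 1) =
        -(g j) ^ 2 * (if 0 ≤ x j - t j * g j then (1 : ℝ) else 0) := by
  classical
  set d : Fin n → ℝ := fun j => if 0 ≤ x j - t j * g j then -(g j) ^ 2 else 0 with hd
  refine ⟨∑ j, d j • (ContinuousLinearMap.proj j : (Fin n → ℝ) →L[ℝ] ℝ), ?_, ?_⟩
  · -- rewrite lp as a sum of one-variable functions plus a constant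
    have hlp' : lp = fun t' : Fin n → ℝ =>
        (∑ j, g j * max (x j - t' j * g j) 0) + (b ⬝ᵥ lam - Lagr A b c x lam) := by
      funext t'
      rw [hlp]
      show Lagr A b c (projPos (x - (Matrix.diagonal t').mulVec g)) lam - Lagr A b c x lam = _
      unfold Lagr
      rw [Matrix.dotProduct_mulVec, ← Matrix.mulVec_transpose]
      have : c ⬝ᵥ projPos (x - (Matrix.diagonal t').mulVec g)
          - Aᵀ.mulVec lam ⬝ᵥ projPos (x - (Matrix.diagonal t').mulVec g)
          = g ⬝ᵥ projPos (x - (Matrix.diagonal t').mulVec g) := by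
        rw [hg, sub_dotProduct]
      rw [this]
      have hgd : g ⬝ᵥ projPos (x - (Matrix.diagonal t').mulVec g)
          = ∑ j, g j * max (x j - t' j * g j) 0 := by
        unfold projPos dotProduct
        refine Finset.sum_congr rfl fun j _ => ?_
        simp only [Pi.sub_apply, Matrix.mulVec_diagonal]
      rw [hgd]
      ring
    rw [hlp']
    refine (HasFDerivAt.fun_sum fun j _ => ?_).add_const _
    -- derivative of t' ↦ g j * max (x j - t' j * g j) 0
    have hc : ContinuousAt (fun t' : Fin n → ℝ => x j - t' j * g j) t := by
      exact (continuousAt_const.sub (((continuous_apply j).continuousAt).mul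
        continuousAt_const))
    rcases lt_or_gt_of_ne (hnz j) with hneg | hpos
    · -- x j - t j * g j < 0 : function is eventually 0
      have hev : ∀ᶠ t' in nhds t, x j - t' j * g j < 0 :=
        hc.eventually (eventually_lt_nhds hneg)
      have heq : (fun t' : Fin n → ℝ => g j * max (x j - t' j * g j) 0)
          =ᶠ[nhds t] fun _ => (0 : ℝ) := by
        filter_upwards [hev] with t' ht'
        rw [max_eq_right ht'.le, mul_zero]
      have hd0 : d j = 0 := by simp only [hd]; rw [if_neg (not_le.2 hneg)]
      have : HasFDerivAt (fun _ : Fin n → ℝ => (0 : ℝ))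
          (d j • (ContinuousLinearMap.proj j : (Fin n → ℝ) →L[ℝ] ℝ)) t := by
        rw [hd0, zero_smul]; exact hasFDerivAt_const 0 t
      exact this.congr_of_eventuallyEq heq
    · -- x j - t j * g j > 0 : function is eventually linear
      have hev : ∀ᶠ t' in nhds t, 0 < x j - t' j * g j :=
        hc.eventually (eventually_gt_nhds hpos)
      have heq : (fun t' : Fin n → ℝ => g j * max (x j - t' j * g j) 0)
          =ᶠ[nhds t] fun t' => g j * (x j - t' j * g j) := by
        filter_upwards [hev] with t' ht'
        rw [max_eq_left ht'.le]
      have hlin : HasFDerivAt (fun t' : Fin n → ℝ => g j * (x j - t' j * g j))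
          (d j • (ContinuousLinearMap.proj j : (Fin n → ℝ) →L[ℝ] ℝ)) t := by
        have h1 : HasFDerivAt (fun t' : Fin n → ℝ => t' j)
            (ContinuousLinearMap.proj j : (Fin n → ℝ) →L[ℝ] ℝ) t :=
          (ContinuousLinearMap.proj j : (Fin n → ℝ) →L[ℝ] ℝ).hasFDerivAt
        have h2 := ((h1.mul_const (g j)).const_sub (x j)).const_mul (g j)
        have hdj : d j = -(g j) ^ 2 := by simp only [hd]; rw [if_pos hpos.le]
        refine h2.congr_fderiv ?_
        ext v
        simp [hdj]
        ring
      exact hlin.congr_of_eventuallyEq heq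
  · intro j
    rw [ContinuousLinearMap.sum_apply]
    have : ∀ i, (d i • (ContinuousLinearMap.proj i : (Fin n → ℝ) →L[ℝ] ℝ))
        (Pi.single j 1) = if i = j then d i else 0 := by
      intro i
      simp [ContinuousLinearMap.proj_apply, Pi.single_apply]
    rw [Finset.sum_congr rfl fun i _ => this i, Finset.sum_ite_eq' Finset.univ j d]
    by_cases h : 0 ≤ x j - t j * g j
    · simp only [hd]; rw [if_pos h, if_pos h]; simp
    · simp only [hd]; rw [if_neg h, if_neg h]; simp
end

section
/- For the normalized primal loss ℓ̄^p(T) = [L(x⁺(T), λ) - L(x, λ)] / ‖c - A^Tλ‖² with x⁺(T) = proj_{ℝ^n_+}(x - T(c - A^Tλ)), x ≥ 0, and g = c - A^Tλ ≠ 0, the loss is bounded: -‖T‖₂ ≤ ℓ̄^p(T) ≤ 0 for any nonnegative diagonal T. -/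
open Matrix

/-- the normalized primal loss
`ℓ̄ᵖ(T) = (L(x⁺(T), λ) - L(x, λ)) / ‖c - Aᵀλ‖²`, with
`x⁺(T) = proj_{ℝ^n_+}(x - T(c - Aᵀλ))`, `x ≥ 0` and `g = c - Aᵀλ ≠ 0`, is
bounded: `-‖T‖₂ ≤ ℓ̄ᵖ(T) ≤ 0` for any nonnegative diagonal `T = Diag(t)`,
where `‖T‖₂ = maxⱼ tⱼ`. -/
theorem normalized_primal_loss_bounds {m n : ℕ}
    (A : Matrix (Fin m) (Fin n) ℝ) (b : Fin m → ℝ) (c : Fin n → ℝ)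
    (x : Fin n → ℝ) (lam : Fin m → ℝ) (hx : ∀ j, 0 ≤ x j)
    (g : Fin n → ℝ) (hg : g = c - Aᵀ.mulVec lam) (hg0 : g ≠ 0)
    (t : Fin n → ℝ) (ht : ∀ j, 0 ≤ t j)
    (lbar : ℝ)
    (hlbar : lbar =
      (Lagr A b c (projPos (x - (Matrix.diagonal t).mulVec g)) lam -
        Lagr A b c x lam) / ‖(EuclideanSpace.equiv (Fin n) ℝ).symm g‖ ^ 2) :
    -(⨆ j, t j) ≤ lbar ∧ lbar ≤ 0 := by
  have hne : Nonempty (Fin n) := by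
    rcases n with _ | n
    · exact absurd (funext fun j => j.elim0) hg0
    · exact ⟨0⟩
  set y : Fin n → ℝ := projPos (x - (Matrix.diagonal t).mulVec g) with hy
  have hyj : ∀ j, y j = max (x j - t j * g j) 0 := by
    intro j
    simp [hy, projPos, Matrix.mulVec_diagonal]
  -- Lagrangian is linear with gradient g
  have key : ∀ v : Fin n → ℝ, Lagr A b c v lam = (∑ j, g j * v j) + b ⬝ᵥ lam := by
    intro v
    have : lam ⬝ᵥ A.mulVec v = (Aᵀ.mulVec lam) ⬝ᵥ v := by
      rw [Matrix.mulVec_transpose, ← Matrix.dotProduct_mulVec]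
    simp only [Lagr, this, hg]
    simp only [dotProduct, Pi.sub_apply]
    rw [← Finset.sum_sub_distrib]
    congr 1
    exact Finset.sum_congr rfl fun j _ => by ring
  have hN : Lagr A b c y lam - Lagr A b c x lam = ∑ j, g j * (y j - x j) := by
    rw [key y, key x]; ring_nf; rw [← Finset.sum_sub_distrib]
  -- componentwise bounds
  have hcomp : ∀ j, -(t j * g j ^ 2) ≤ g j * (y j - x j) ∧ g j * (y j - x j) ≤ 0 := by
    intro j
    rcases le_or_gt 0 (x j - t j * g j) with h | h
    · have : y j = x j - t j * g j := by rw [hyj j, max_eq_left h]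
      rw [this]
      constructor <;> nlinarith [ht j, sq_nonneg (g j)]
    · have hy0 : y j = 0 := by rw [hyj j, max_eq_right h.le]
      have hxj := hx j
      have htj := ht j
      have hgpos : 0 < g j := by nlinarith
      rw [hy0]
      constructor <;> nlinarith
  have hsum_le : ∑ j, g j * (y j - x j) ≤ 0 :=
    Finset.sum_nonpos fun j _ => (hcomp j).2
  have hsum_ge : -(∑ j, t j * g j ^ 2) ≤ ∑ j, g j * (y j - x j) := by
    rw [← Finset.sum_neg_distrib]
    exact Finset.sum_le_sum fun j _ => (hcomp j).1
  -- sup bound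
  set S := ⨆ j, t j with hS
  have hbdd : BddAbove (Set.range t) := Set.Finite.bddAbove (Set.finite_range t)
  have htS : ∀ j, t j ≤ S := fun j => le_ciSup hbdd j
  have hS0 : 0 ≤ S := le_trans (ht (Classical.arbitrary _)) (htS _)
  have hsum_t : ∑ j, t j * g j ^ 2 ≤ S * ∑ j, g j ^ 2 := by
    rw [Finset.mul_sum]
    exact Finset.sum_le_sum fun j _ => mul_le_mul_of_nonneg_right (htS j) (sq_nonneg _)
  -- norm
  have hnorm : ‖(EuclideanSpace.equiv (Fin n) ℝ).symm g‖ ^ 2 = ∑ j, g j ^ 2 := by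
    rw [EuclideanSpace.norm_eq, Real.sq_sqrt (Finset.sum_nonneg fun j _ => sq_nonneg _)]
    simp [Real.norm_eq_abs, sq_abs]
  have hpos : 0 < ∑ j, g j ^ 2 := by
    obtain ⟨j, hj⟩ : ∃ j, g j ≠ 0 := by
      by_contra h
      push_neg at h
      exact hg0 (funext h)
    exact Finset.sum_pos' (fun i _ => sq_nonneg _) ⟨j, Finset.mem_univ j, by positivity⟩
  rw [hlbar, hN, hnorm]
  constructor
  · rw [le_div_iff₀ hpos]
    nlinarith
  · exact div_nonpos_of_nonpos_of_nonneg hsum_le hpos.le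
end
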